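/- Let φ(t) = (C/θ)t^θ with C > 0, θ ∈ (0, 1]. Suppose a positive nonincreasing sequence (rₖ) with rₖ → 0 satisfies φ'(r_{k+1})²(rₖ − r_{k+1}) ≥ aₖ b_{k+1}² for all k ≥ k₀, where inf_k aₖ b_{k+1} =: m > 0 and sup_k bₖ =: b̄ < ∞. If θ ∈ [1/2, 1), then there exist c > 0 and k₁ ≥ k₀ such that r_{k+1} ≤ r_{k₁} exp(−c Σ_{n=k₁}^{k} b_{n+1}) for all k ≥ k₁. -/

import Mathlib

set_option maxHeartbeats 1000000 in
theorem stmt_12 (θ C : ℝ) (hθ : θ ∈ Set.Ico (1 / 2 : ℝ) 1) (hC : 0 < C)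
    (r a b : ℕ → ℝ) (m βbar : ℝ) (k₀ : ℕ)
    (hrpos : ∀ k, 0 < r k) (hrmono : ∀ k, r (k + 1) ≤ r k)
    (hrlim : Filter.Tendsto r Filter.atTop (nhds 0))
    (ha : ∀ k, 0 < a k) (hb : ∀ k, 0 < b k)
    (hm : 0 < m) (hminf : ∀ k, m ≤ a k * b (k + 1))
    (hbbar : ∀ k, b k ≤ βbar)
    (hineq : ∀ k ≥ k₀, (C * r (k + 1) ^ (θ - 1)) ^ 2 * (r k - r (k + 1)) ≥ a k * b (k + 1) ^ 2) :
    ∃ c > 0, ∃ k₁ ≥ k₀, ∀ k ≥ k₁,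
      r (k + 1) ≤ r k₁ * Real.exp (-c * ∑ n ∈ Finset.Icc k₁ k, b (n + 1)) := by
  obtain ⟨hθ1, hθ2⟩ := hθ
  obtain ⟨N, hN⟩ := Filter.eventually_atTop.mp (hrlim.eventually_lt_const one_pos)
  have hβbar : 0 < βbar := lt_of_lt_of_le (hb 0) (hbbar 0)
  have hC2 : (0:ℝ) < C ^ 2 := by positivity
  have hD : (0:ℝ) < C ^ 2 + m * βbar := by positivity
  set c := m / (C ^ 2 + m * βbar) with hc
  have hcpos : 0 < c := by positivity
  refine ⟨c, hcpos, max k₀ N, le_max_left _ _, ?_⟩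
  set k₁ := max k₀ N with hk₁
  have step : ∀ k, k₁ ≤ k → r (k + 1) ≤ r k * Real.exp (-(c * b (k + 1))) := by
    intro k hk
    have hk0 : k₀ ≤ k := le_trans (le_max_left _ _) hk
    have hkN : N ≤ k + 1 := le_trans (le_max_right k₀ N) (le_trans hk (Nat.le_succ k))
    have hr1 : r (k + 1) < 1 := hN _ hkN
    have hx : 0 < r (k + 1) := hrpos _
    have hrr : (0:ℝ) ≤ r k - r (k + 1) := sub_nonneg.mpr (hrmono k)
    have hineq' := hineq k hk0
    have hpow : (C * r (k + 1) ^ (θ - 1)) ^ 2 = C ^ 2 * r (k + 1) ^ (2 * θ - 2) := by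
      rw [mul_pow, ← Real.rpow_natCast (r (k + 1) ^ (θ - 1)) 2, ← Real.rpow_mul hx.le]
      congr 1
      push_cast
      ring
    have hle : r (k + 1) ^ (2 * θ - 2) ≤ r (k + 1) ^ (-1 : ℝ) :=
      Real.rpow_le_rpow_of_exponent_ge hx hr1.le (by linarith)
    have hinv : r (k + 1) ^ (-1 : ℝ) = (r (k + 1))⁻¹ := Real.rpow_neg_one _
    have key : a k * b (k + 1) ^ 2 * r (k + 1) ≤ C ^ 2 * (r k - r (k + 1)) := by
      have h1 : a k * b (k + 1) ^ 2 ≤ C ^ 2 * (r (k + 1))⁻¹ * (r k - r (k + 1)) := by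
        calc a k * b (k + 1) ^ 2 ≤ (C * r (k + 1) ^ (θ - 1)) ^ 2 * (r k - r (k + 1)) := hineq'
          _ = C ^ 2 * r (k + 1) ^ (2 * θ - 2) * (r k - r (k + 1)) := by rw [hpow]
          _ ≤ C ^ 2 * (r (k + 1))⁻¹ * (r k - r (k + 1)) := by
              refine mul_le_mul_of_nonneg_right ?_ hrr
              rw [← hinv]
              exact mul_le_mul_of_nonneg_left hle hC2.le
      have h2 := mul_le_mul_of_nonneg_right h1 hx.le
      calc a k * b (k + 1) ^ 2 * r (k + 1)
          ≤ C ^ 2 * (r (k + 1))⁻¹ * (r k - r (k + 1)) * r (k + 1) := h2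
        _ = C ^ 2 * (r k - r (k + 1)) := by field_simp
    have hbk : 0 < b (k + 1) := hb _
    have hmb : m * b (k + 1) ≤ a k * b (k + 1) ^ 2 := by nlinarith [hminf k]
    have hmbr : m * b (k + 1) * r (k + 1) ≤ C ^ 2 * (r k - r (k + 1)) := by
      nlinarith [mul_le_mul_of_nonneg_right hmb hx.le]
    have hgrow : (1 + m * b (k + 1) / C ^ 2) * r (k + 1) ≤ r k := by
      have h3 : m * b (k + 1) * r (k + 1) / C ^ 2 ≤ r k - r (k + 1) :=
        (div_le_iff₀ hC2).mpr (by nlinarith)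
      have h4 : (1 + m * b (k + 1) / C ^ 2) * r (k + 1)
          = r (k + 1) + m * b (k + 1) * r (k + 1) / C ^ 2 := by ring
      linarith
    have hbb := hbbar (k + 1)
    have h1 : (1:ℝ) ≤ (1 + m * b (k + 1) / C ^ 2) * (1 - c * b (k + 1)) := by
      have heq : (1 + m * b (k + 1) / C ^ 2) * (1 - c * b (k + 1)) - 1
          = m * b (k + 1) * (m * βbar - m * b (k + 1)) / ((C ^ 2 + m * βbar) * C ^ 2) := by
        rw [hc]; field_simp; ring
      have hnn : (0:ℝ) ≤ m * b (k + 1) * (m * βbar - m * b (k + 1))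
          / ((C ^ 2 + m * βbar) * C ^ 2) := by
        apply div_nonneg _ (by positivity)
        apply mul_nonneg (by positivity)
        nlinarith
      linarith
    have hcb : (0:ℝ) ≤ 1 - c * b (k + 1) := by
      have hlt : c * b (k + 1) < 1 := by
        rw [hc, div_mul_eq_mul_div, div_lt_one hD]
        nlinarith
      linarith
    have hE : 1 - c * b (k + 1) ≤ Real.exp (-(c * b (k + 1))) := by
      have := Real.add_one_le_exp (-(c * b (k + 1)))
      linarith
    calc r (k + 1) = r (k + 1) * 1 := (mul_one _).symm
      _ ≤ r (k + 1) * ((1 + m * b (k + 1) / C ^ 2) * (1 - c * b (k + 1))) :=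
          mul_le_mul_of_nonneg_left h1 hx.le
      _ = ((1 + m * b (k + 1) / C ^ 2) * r (k + 1)) * (1 - c * b (k + 1)) := by ring
      _ ≤ r k * (1 - c * b (k + 1)) := mul_le_mul_of_nonneg_right hgrow hcb
      _ ≤ r k * Real.exp (-(c * b (k + 1))) :=
          mul_le_mul_of_nonneg_left hE (hrpos k).le
  intro k hk
  induction k, hk using Nat.le_induction with
  | base =>
      rw [Finset.Icc_self, Finset.sum_singleton, neg_mul]
      exact step k₁ le_rfl
  | succ k hk ih =>
      have hs : ∑ n ∈ Finset.Icc k₁ (k + 1), b (n + 1)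
          = (∑ n ∈ Finset.Icc k₁ k, b (n + 1)) + b (k + 1 + 1) :=
        Finset.sum_Icc_succ_top (le_trans hk (Nat.le_succ k)) _
      calc r (k + 1 + 1) ≤ r (k + 1) * Real.exp (-(c * b (k + 1 + 1))) :=
            step (k + 1) (le_trans hk (Nat.le_succ k))
        _ ≤ (r k₁ * Real.exp (-c * ∑ n ∈ Finset.Icc k₁ k, b (n + 1))) *
              Real.exp (-(c * b (k + 1 + 1))) :=
            mul_le_mul_of_nonneg_right ih (Real.exp_pos _).le
        _ = r k₁ * Real.exp (-c * ∑ n ∈ Finset.Icc k₁ (k + 1), b (n + 1)) := by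
            rw [hs, mul_assoc, ← Real.exp_add]
            congr 2
            ring
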